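/- Let d_1, ..., d_n be nonnegative integers, set d_0 = d_{n+1} = 0, and for 1 ≤ i ≤ j ≤ n define m_{ij} = max(min{ min(d_k - d_{i-1}, d_k - d_{j+1}) : i ≤ k ≤ j }, 0). Then for every vertex l with 1 ≤ l ≤ n, the sum of m_{ij} over all intervals [i,j] containing l equals d_l. -/

import Mathlib

/-- Dimension-vector consistency of the piecewise-linear multiplicity formula for the
equioriented type `Aₙ` quiver `1 → 2 → ⋯ → n`: with `d₀ = d_{n+1} = 0` and
`m_{ij} = [min { min (d_k - d_{i-1}) (d_k - d_{j+1}) : i ≤ k ≤ j }]₊`,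
summing `m_{ij}` over all intervals `[i, j] ⊆ [1, n]` containing a vertex `l` gives `d_l`. -/
theorem sum_multiplicities_eq_dim (n : ℕ) (d : ℕ → ℤ)
    (hpos : ∀ i, 0 ≤ d i) (h0 : d 0 = 0) (hn : d (n + 1) = 0)
    (l : ℕ) (hl1 : 1 ≤ l) (hln : l ≤ n) :
    ∑ p ∈ Finset.Icc 1 l ×ˢ Finset.Icc l n,
      max (sInf {x : ℤ | ∃ k, p.1 ≤ k ∧ k ≤ p.2 ∧
        x = min (d k - d (p.1 - 1)) (d k - d (p.2 + 1))}) 0 = d l := by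
  classical
  set t := Finset.Icc 1 l ×ˢ Finset.Icc l n with ht
  set φ : ℤ → ℕ × ℕ := fun h =>
    (WithBot.unbotD 0 ((Finset.Icc 1 l).filter (fun i => d (i - 1) < h)).max,
     WithTop.untopD 0 ((Finset.Icc l n).filter (fun j => d (j + 1) < h)).min) with hφ
  -- basic properties of φ on heights in [1, d l]
  have spec : ∀ h : ℤ, 1 ≤ h → h ≤ d l →
      ((φ h).1 ∈ Finset.Icc 1 l ∧ d ((φ h).1 - 1) < h ∧
        ∀ i ∈ Finset.Icc 1 l, d (i - 1) < h → i ≤ (φ h).1) ∧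
      ((φ h).2 ∈ Finset.Icc l n ∧ d ((φ h).2 + 1) < h ∧
        ∀ j ∈ Finset.Icc l n, d (j + 1) < h → (φ h).2 ≤ j) := by
    intro h h1 h2
    have h1m : (1 : ℕ) ∈ (Finset.Icc 1 l).filter (fun i => d (i - 1) < h) := by
      simp only [Finset.mem_filter, Finset.mem_Icc]
      refine ⟨⟨le_refl 1, hl1⟩, ?_⟩
      simpa [h0] using (show (0:ℤ) < h by omega)
    have hnm : n ∈ (Finset.Icc l n).filter (fun j => d (j + 1) < h) := by
      simp only [Finset.mem_filter, Finset.mem_Icc]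
      refine ⟨⟨hln, le_refl n⟩, ?_⟩
      simpa [hn] using (show (0:ℤ) < h by omega)
    obtain ⟨a, ha⟩ := Finset.max_of_mem h1m
    obtain ⟨b, hb⟩ := Finset.min_of_mem hnm
    have hφ1 : (φ h).1 = a := by simp [hφ, ha]
    have hφ2 : (φ h).2 = b := by simp only [hφ]; rw [hb]; rfl
    have haS := Finset.mem_of_max ha
    have hbS := Finset.mem_of_min hb
    rw [Finset.mem_filter] at haS hbS
    refine ⟨⟨hφ1 ▸ haS.1, hφ1 ▸ haS.2, ?_⟩, ⟨hφ2 ▸ hbS.1, hφ2 ▸ hbS.2, ?_⟩⟩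
    · intro i hi hdi
      rw [hφ1]
      exact Finset.le_max_of_eq (Finset.mem_filter.mpr ⟨hi, hdi⟩) ha
    · intro j hj hdj
      rw [hφ2]
      exact Finset.min_le_of_eq (Finset.mem_filter.mpr ⟨hj, hdj⟩) hb
  have memt : ∀ h ∈ Finset.Icc 1 (d l), φ h ∈ t := by
    intro h hh
    rw [Finset.mem_Icc] at hh
    obtain ⟨⟨ha, _, _⟩, ⟨hb, _, _⟩⟩ := spec h hh.1 hh.2
    exact Finset.mem_product.mpr ⟨ha, hb⟩
  calc
    ∑ p ∈ t, max (sInf {x : ℤ | ∃ k, p.1 ≤ k ∧ k ≤ p.2 ∧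
        x = min (d k - d (p.1 - 1)) (d k - d (p.2 + 1))}) 0
      = ∑ p ∈ t, (((Finset.Icc 1 (d l)).filter (fun h => φ h = p)).card : ℤ) := by
        refine Finset.sum_congr rfl fun p hp => ?_
        obtain ⟨i, j⟩ := p
        rw [ht, Finset.mem_product, Finset.mem_Icc, Finset.mem_Icc] at hp
        obtain ⟨⟨hi1, hil⟩, ⟨hlj, hjn⟩⟩ := hp
        have hne : (Finset.Icc i j).Nonempty := ⟨l, Finset.mem_Icc.mpr ⟨hil, hlj⟩⟩
        set Cp : ℤ := max (d (i - 1)) (d (j + 1)) with hCp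
        set M : ℤ := (Finset.Icc i j).inf' hne d with hM
        -- Step A: the infimum equals M - Cp
        have hset : {x : ℤ | ∃ k, i ≤ k ∧ k ≤ j ∧
            x = min (d k - d (i - 1)) (d k - d (j + 1))}
            = (fun k => d k - Cp) '' ↑(Finset.Icc i j) := by
          ext x
          simp only [Set.mem_setOf_eq, Set.mem_image, Finset.coe_Icc, Set.mem_Icc]
          constructor
          · rintro ⟨k, hk1, hk2, rfl⟩
            exact ⟨k, ⟨hk1, hk2⟩, (min_sub_sub_left _ _ _).symm⟩
          · rintro ⟨k, ⟨hk1, hk2⟩, rfl⟩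
            exact ⟨k, hk1, hk2, (min_sub_sub_left _ _ _).symm⟩
        have hinf : sInf {x : ℤ | ∃ k, i ≤ k ∧ k ≤ j ∧
            x = min (d k - d (i - 1)) (d k - d (j + 1))} = M - Cp := by
          rw [hset, ← Finset.inf'_eq_csInf_image _ hne]
          apply le_antisymm
          · obtain ⟨k, hk, hkeq⟩ := Finset.exists_mem_eq_inf' hne d
            rw [hM, hkeq]
            exact Finset.inf'_le _ hk
          · exact Finset.le_inf' _ _ fun k hk => sub_le_sub_right (Finset.inf'_le _ hk) _
        -- Step C: the fiber over (i, j) is Icc (Cp + 1) M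
        have hfiber : (Finset.Icc 1 (d l)).filter (fun h => φ h = (i, j))
            = Finset.Icc (Cp + 1) M := by
          ext h
          simp only [Finset.mem_filter, Finset.mem_Icc]
          constructor
          · rintro ⟨⟨hh1, hh2⟩, hfe⟩
            obtain ⟨⟨haI, hda, hamax⟩, ⟨hbI, hdb, hbmin⟩⟩ := spec h hh1 hh2
            rw [hfe] at haI hda hamax hbI hdb hbmin
            constructor
            · have : Cp < h := max_lt hda hdb
              omega
            · rw [hM]
              refine Finset.le_inf' _ _ fun k hk => ?_
              rw [Finset.mem_Icc] at hk
              by_contra hcon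
              push_neg at hcon
              rcases lt_trichotomy k l with hkl | hkl | hkl
              · have hk1 : k + 1 ∈ Finset.Icc 1 l := Finset.mem_Icc.mpr ⟨by omega, by omega⟩
                have : k + 1 ≤ i := hamax (k + 1) hk1 (by simpa using hcon)
                omega
              · subst hkl; exact absurd hh2 (by omega)
              · have hk1 : k - 1 ∈ Finset.Icc l n := Finset.mem_Icc.mpr ⟨by omega, by omega⟩
                have hdk : d (k - 1 + 1) < h := by
                  have : k - 1 + 1 = k := by omega
                  rw [this]; exact hcon
                have : j ≤ k - 1 := hbmin (k - 1) hk1 hdk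
                omega
          · rintro ⟨hc, hM'⟩
            have hCp0 : 0 ≤ Cp := le_trans (hpos (i - 1)) (le_max_left _ _)
            have hMl : M ≤ d l := by
              rw [hM]; exact Finset.inf'_le _ (Finset.mem_Icc.mpr ⟨hil, hlj⟩)
            have hh1 : 1 ≤ h := by omega
            have hh2 : h ≤ d l := le_trans hM' hMl
            obtain ⟨⟨haI, hda, hamax⟩, ⟨hbI, hdb, hbmin⟩⟩ := spec h hh1 hh2
            have hMle : ∀ k, i ≤ k → k ≤ j → h ≤ d k := fun k hk1 hk2 =>
              le_trans hM' (Finset.inf'_le _ (Finset.mem_Icc.mpr ⟨hk1, hk2⟩))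
            refine ⟨⟨hh1, hh2⟩, ?_⟩
            have hdi : d (i - 1) < h := by
              have : d (i - 1) ≤ Cp := le_max_left _ _
              omega
            have hdj : d (j + 1) < h := by
              have : d (j + 1) ≤ Cp := le_max_right _ _
              omega
            have h1 : i ≤ (φ h).1 := hamax i (Finset.mem_Icc.mpr ⟨hi1, hil⟩) hdi
            have h2 : (φ h).1 ≤ i := by
              by_contra hcon
              push_neg at hcon
              rw [Finset.mem_Icc] at haI
              have hk : h ≤ d ((φ h).1 - 1) :=
                hMle ((φ h).1 - 1) (by omega) (by omega)
              omega
            have h3 : (φ h).2 ≤ j := hbmin j (Finset.mem_Icc.mpr ⟨hlj, hjn⟩) hdj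
            have h4 : j ≤ (φ h).2 := by
              by_contra hcon
              push_neg at hcon
              rw [Finset.mem_Icc] at hbI
              have hk : h ≤ d ((φ h).2 + 1) :=
                hMle ((φ h).2 + 1) (by omega) (by omega)
              omega
            have : (φ h).1 = i := le_antisymm h2 h1
            have : (φ h).2 = j := le_antisymm h3 h4
            exact Prod.ext ‹(φ h).1 = i› ‹(φ h).2 = j›
        -- Step B: assemble
        rw [hinf, hfiber, Int.card_Icc]
        have : M + 1 - (Cp + 1) = M - Cp := by ring
        rw [this, Int.toNat_eq_max]
    _ = ((Finset.Icc 1 (d l)).card : ℤ) := by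
        rw [← Nat.cast_sum, ← Finset.card_eq_sum_card_fiberwise memt]
    _ = d l := by
        rw [Int.card_Icc, add_sub_cancel_right, Int.toNat_of_nonneg (hpos l)]
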